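/- Let ξ₁ and ξ₂ be elements of T*⊗u(n)^⊥ with ξ₁ of type W₁ (totally skew with ⟨ξ₁_X Y, Z⟩ a 3-form of type (3,0)+(0,3)) and ξ₂ of type W₂. Then Σ_{i,j} ⟨ξ₁_{e_j} e_i, ξ₂_{e_j} J e_i⟩ = 0; i.e., since ξ₂ ∘ J (precomposition in the last slot with J) is again of type W₂, the W₁ and W₂ components are pointwise orthogonal under this pairing. -/

import Mathlib

/-- Let `ξ₁, ξ₂ ∈ T* ⊗ u(n)^⊥` (i.e. `⟨ξ_X Y, Z⟩ = -⟨ξ_X Z, Y⟩` and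
`J ξ_X Y + ξ_X (JY) = 0`), with `ξ₁` of type `W₁` (totally skew) and `ξ₂` of type `W₂`
(vanishing cyclic sum and vanishing trace).  Then
`∑_{i,j} ⟨ξ₁_{e_j} e_i, ξ₂_{e_j} J e_i⟩ = 0`: since `ξ₂ ∘ J` is again of type `W₂`, the
`W₁`- and `W₂`-parts are pointwise orthogonal under this pairing.  (Dimension `2n`, `n ≥ 3`.) -/
theorem stmt_18
    (n : ℕ) (hn : 3 ≤ n)
    (J : (Fin (2 * n) → ℝ) →ₗ[ℝ] (Fin (2 * n) → ℝ))
    (ξ₁ ξ₂ : (Fin (2 * n) → ℝ) →ₗ[ℝ] (Fin (2 * n) → ℝ) →ₗ[ℝ] (Fin (2 * n) → ℝ)) :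
    let V := Fin (2 * n) → ℝ
    let dot : V → V → ℝ := fun X Y => ∑ i, X i * Y i
    let E : Fin (2 * n) → V := fun i => Pi.single i 1
    -- J is a compatible complex structure
    (∀ X, J (J X) = -X) →
    (∀ X Y, dot (J X) (J Y) = dot X Y) →
    -- ξ₁, ξ₂ ∈ T* ⊗ u(n)^⊥
    (∀ X Y Z, dot (ξ₁ X Y) Z = -dot (ξ₁ X Z) Y) →
    (∀ X Y, J (ξ₁ X Y) + ξ₁ X (J Y) = 0) →
    (∀ X Y Z, dot (ξ₂ X Y) Z = -dot (ξ₂ X Z) Y) →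
    (∀ X Y, J (ξ₂ X Y) + ξ₂ X (J Y) = 0) →
    -- ξ₁ is of type W₁: ⟨ξ₁_X Y, Z⟩ is totally skew-symmetric
    (∀ X Y Z, dot (ξ₁ X Y) Z = -dot (ξ₁ Y X) Z) →
    -- ξ₂ is of type W₂: vanishing cyclic sum and vanishing trace
    (∀ X Y Z, dot (ξ₂ X Y) Z + dot (ξ₂ Y Z) X + dot (ξ₂ Z X) Y = 0) →
    (∑ i, ξ₂ (E i) (E i) = 0) →
    -- the pairing of ξ₁ with ξ₂ ∘ J vanishes
    ∑ j, ∑ i, dot (ξ₁ (E j) (E i)) (ξ₂ (E j) (J (E i))) = 0 := by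
  intro V dot E hJJ hJd h1s h1J h2s h2J hW1 hcyc _htr
  have hdot : dot = fun X Y => ∑ i, X i * Y i := rfl
  have hE : E = fun i => (Pi.single i 1 : V) := rfl
  -- linearity of dot in each argument w.r.t. negation
  have dneg1 : ∀ u v : V, dot (-u) v = -dot u v := by
    intro u v
    simp only [hdot]
    rw [← Finset.sum_neg_distrib]
    refine Finset.sum_congr rfl fun i _ => ?_
    have h : (-u) i = -(u i) := rfl
    rw [h]; ring
  have dneg2 : ∀ u v : V, dot u (-v) = -dot u v := by
    intro u v
    simp only [hdot]
    rw [← Finset.sum_neg_distrib]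
    refine Finset.sum_congr rfl fun i _ => ?_
    have h : (-v) i = -(v i) := rfl
    rw [h]; ring
  -- moving J across the inner product
  have dJ : ∀ u v : V, dot (J u) v = -dot u (J v) := by
    intro u v
    have h := hJd u (J v)
    rw [hJJ v] at h
    rw [dneg2] at h
    linarith
  -- J moves between the 2nd and 3rd slots of ξ₁ and ξ₂
  have L1a : ∀ X Y Z : V, dot (ξ₁ X (J Y)) Z = dot (ξ₁ X Y) (J Z) := by
    intro X Y Z
    have h : ξ₁ X (J Y) = -(J (ξ₁ X Y)) := by
      have := h1J X Y; linear_combination this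
    rw [h, dneg1, dJ]
    ring
  have L1b : ∀ X Y Z : V, dot (ξ₂ X (J Y)) Z = dot (ξ₂ X Y) (J Z) := by
    intro X Y Z
    have h : ξ₂ X (J Y) = -(J (ξ₂ X Y)) := by
      have := h2J X Y; linear_combination this
    rw [h, dneg1, dJ]
    ring
  -- cyclic invariance of ⟨ξ₁ X Y, Z⟩
  have L2 : ∀ X Y Z : V, dot (ξ₁ X Y) Z = dot (ξ₁ Y Z) X := by
    intro X Y Z
    rw [hW1 X Y Z, h1s Y X Z]
    ring
  -- key identity: ⟨ξ₂ (J X) (J Y), Z⟩ = -⟨ξ₂ X Y, Z⟩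
  have eqG : ∀ X Y Z : V, dot (ξ₂ (J X) (J Y)) Z + dot (ξ₂ (J Y) (J Z)) X
      - dot (ξ₂ Z X) Y = 0 := by
    intro X Y Z
    have h := hcyc (J X) (J Y) Z
    have h1 : dot (ξ₂ (J Y) Z) (J X) = dot (ξ₂ (J Y) (J Z)) X := (L1b (J Y) Z X).symm
    have h2 : dot (ξ₂ Z (J X)) (J Y) = -dot (ξ₂ Z X) Y := by
      have := L1b Z X (J Y)
      rw [hJJ Y, dneg2] at this
      linarith
    rw [h1, h2] at h
    linarith
  have L3 : ∀ X Y Z : V, dot (ξ₂ (J X) (J Y)) Z = -dot (ξ₂ X Y) Z := by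
    intro X Y Z
    have e1 := eqG X Y Z
    have e2 := eqG Y Z X
    have e3 := eqG Z X Y
    have e4 := hcyc X Y Z
    linarith
  have L4 : ∀ X Y Z : V, dot (ξ₂ (J X) Y) Z = dot (ξ₂ X (J Y)) Z := by
    intro X Y Z
    have h := L3 X (J Y) Z
    rw [hJJ Y] at h
    have hm : ξ₂ (J X) (-Y) = -(ξ₂ (J X) Y) := map_neg _ _
    rw [hm, dneg1] at h
    linarith
  -- cyclic sum of ξ₂ ∘ J vanishes
  have L5 : ∀ X Y Z : V, dot (ξ₂ X (J Y)) Z + dot (ξ₂ Y (J Z)) X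
      + dot (ξ₂ Z (J X)) Y = 0 := by
    intro X Y Z
    have h := hcyc X Y (J Z)
    rw [← L1b X Y Z] at h
    rw [show dot (ξ₂ (J Z) X) Y = dot (ξ₂ Z (J X)) Y from L4 Z X Y] at h
    linarith
  -- expand inner products into coordinates
  have hde : ∀ (u : V) (k : Fin (2 * n)), dot u (E k) = u k := by
    intro u k
    simp [hdot, hE, Pi.single_apply, mul_ite, mul_one, mul_zero]
  have hexp : ∀ u v : V, dot u v = ∑ k, dot u (E k) * dot v (E k) := by
    intro u v
    simp only [hde]
    rfl
  set A : Fin (2 * n) → Fin (2 * n) → Fin (2 * n) → ℝ :=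
    fun j i k => dot (ξ₁ (E j) (E i)) (E k) with hA
  set Bt : Fin (2 * n) → Fin (2 * n) → Fin (2 * n) → ℝ :=
    fun j i k => dot (ξ₂ (E j) (J (E i))) (E k) with hBt
  have hAcyc : ∀ j i k, A j i k = A i k j := fun j i k => L2 (E j) (E i) (E k)
  have hBcyc : ∀ j i k, Bt j i k + Bt i k j + Bt k j i = 0 :=
    fun j i k => L5 (E j) (E i) (E k)
  have hgoal : (∑ j, ∑ i, dot (ξ₁ (E j) (E i)) (ξ₂ (E j) (J (E i))))
      = ∑ j, ∑ i, ∑ k, A j i k * Bt j i k := by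
    refine Finset.sum_congr rfl fun j _ => Finset.sum_congr rfl fun i _ => ?_
    exact hexp _ _
  rw [hgoal]
  set S : ℝ := ∑ j, ∑ i, ∑ k, A j i k * Bt j i k with hS
  -- reindexed versions
  have hS2 : (∑ j, ∑ i, ∑ k, A j i k * Bt i k j) = S := by
    rw [hS]
    have : (∑ j, ∑ i, ∑ k, A j i k * Bt i k j)
        = ∑ j, ∑ i, ∑ k, A i k j * Bt i k j := by
      refine Finset.sum_congr rfl fun j _ => Finset.sum_congr rfl fun i _ =>
        Finset.sum_congr rfl fun k _ => ?_
      rw [hAcyc]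
    rw [this]
    rw [Finset.sum_comm]
    exact Finset.sum_congr rfl fun y _ => Finset.sum_comm
  have hS3 : (∑ j, ∑ i, ∑ k, A j i k * Bt k j i) = S := by
    rw [hS]
    have : (∑ j, ∑ i, ∑ k, A j i k * Bt k j i)
        = ∑ j, ∑ i, ∑ k, A k j i * Bt k j i := by
      refine Finset.sum_congr rfl fun j _ => Finset.sum_congr rfl fun i _ =>
        Finset.sum_congr rfl fun k _ => ?_
      rw [hAcyc, hAcyc]
    rw [this]
    have h1 : (∑ j, ∑ i, ∑ k, A k j i * Bt k j i)
        = ∑ j, ∑ k, ∑ i, A k j i * Bt k j i :=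
      Finset.sum_congr rfl fun j _ => Finset.sum_comm
    rw [h1]
    exact Finset.sum_comm
  have hsum : S + S + S = 0 := by
    nth_rewrite 2 [← hS2]
    nth_rewrite 2 [← hS3]
    rw [hS]
    rw [← Finset.sum_add_distrib, ← Finset.sum_add_distrib]
    refine Finset.sum_eq_zero fun j _ => ?_
    rw [← Finset.sum_add_distrib, ← Finset.sum_add_distrib]
    refine Finset.sum_eq_zero fun i _ => ?_
    rw [← Finset.sum_add_distrib, ← Finset.sum_add_distrib]
    refine Finset.sum_eq_zero fun k _ => ?_
    linear_combination A j i k * hBcyc j i k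
  linarith
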